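/- Let a, b be integers with b ≤ 3a^2 − 3, and let γ be the real root of x^3 + 3ax^2 + bx + ab − 2a^3 + 1 = 0 satisfying −a < γ < −a + 1. Let K = ℚ(γ), a cubic number field, viewed as a subfield of ℝ. Define the Algebraic Jacobi-Perron transformation T_K on pairs (α, β) of elements of K ∩ (0,1) with 1, α, β linearly independent over ℚ by: T_K(α, β) = (⟨1/α⟩, ⟨β/α⟩) if α/√|N(α)| > β/√|N(β)|, and T_K(α, β) = (⟨α/β⟩, ⟨1/β⟩) if α/√|N(α)| < β/√|N(β)|. Then the orbit of (γ − ⌊γ⌋, (γ − ⌊γ⌋)^2) under T_K is eventually periodic with period 4: there exists N such that for all n ≥ N, T_K^{n+4}(γ − ⌊γ⌋, (γ − ⌊γ⌋)^2) = T_K^{n}(γ − ⌊γ⌋, (γ − ⌊γ⌋)^2). -/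

import Mathlib

attribute [local instance] Classical.propDecidable

/-- The field norm from `K` to `ℚ` of a real number `x`, when `x ∈ K` (junk value `0`
otherwise), for `K` a subfield of `ℝ`. -/
noncomputable def ajpaNorm (K : IntermediateField ℚ ℝ) (x : ℝ) : ℚ :=
  if h : x ∈ K then Algebra.norm ℚ (⟨x, h⟩ : K) else 0

/-- One step of the Algebraic Jacobi-Perron transformation `T_K` on `n`-tuples, where the
normalizing exponent is `1/n` (for a cubic field, `n = 2` and the normalization is
`x ↦ x / √|N(x)|`): if there is a (necessarily unique) index `j` strictly maximizing
`v j / |N(v j)|^(1/n)`, replace the `j`-th entry by the fractional part `⟨1 / v j⟩` and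
each other entry `v i` by `⟨v i / v j⟩`.  For `n = 2` this is exactly
`T_K(α, β) = (⟨1/α⟩, ⟨β/α⟩)` if `α/√|N(α)| > β/√|N(β)|` and
`T_K(α, β) = (⟨α/β⟩, ⟨1/β⟩)` if `α/√|N(α)| < β/√|N(β)|`; tuples with no strict maximizer
are left unchanged (this case never occurs on the domain `X_K`). -/
noncomputable def ajpaStep (K : IntermediateField ℚ ℝ) {n : ℕ} (v : Fin n → ℝ) :
    Fin n → ℝ :=
  if h : ∃ j : Fin n, ∀ i : Fin n, i ≠ j →
      v i / (|ajpaNorm K (v i)| : ℝ) ^ ((n : ℝ)⁻¹) <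
      v j / (|ajpaNorm K (v j)| : ℝ) ^ ((n : ℝ)⁻¹) then
    fun i => if i = h.choose then Int.fract (1 / v h.choose)
             else Int.fract (v i / v h.choose)
  else v

open IntermediateField Polynomial

theorem ajpaNorm_coe (K : IntermediateField ℚ ℝ) (x : K) :
    ajpaNorm K (x : ℝ) = Algebra.norm ℚ x := by
  rw [ajpaNorm, dif_pos x.2]

theorem ajpaStep_pair (K : IntermediateField ℚ ℝ) (x y : ℝ) (j : Fin 2)
    (h : ∀ i : Fin 2, i ≠ j → ![x, y] i / Real.sqrt |(ajpaNorm K (![x, y] i) : ℝ)| <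
        ![x, y] j / Real.sqrt |(ajpaNorm K (![x, y] j) : ℝ)|) :
    ajpaStep K ![x, y] = fun i => if i = j then Int.fract (1 / ![x, y] j)
        else Int.fract (![x, y] i / ![x, y] j) := by
  have hconv : ∀ (r : ℝ) (q : ℚ),
      r / |(q : ℝ)| ^ (((2 : ℕ) : ℝ))⁻¹ = r / Real.sqrt |(q : ℝ)| := by
    intro r q
    rw [Real.sqrt_eq_rpow]
    norm_num
  unfold ajpaStep
  have hP : ∃ j' : Fin 2, ∀ i : Fin 2, i ≠ j' →
      ![x, y] i / (|ajpaNorm K (![x, y] i)| : ℝ) ^ (((2 : ℕ) : ℝ)⁻¹) <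
      ![x, y] j' / (|ajpaNorm K (![x, y] j')| : ℝ) ^ (((2 : ℕ) : ℝ)⁻¹) := by
    refine ⟨j, fun i hi => ?_⟩
    rw [hconv, hconv]
    exact h i hi
  rw [dif_pos hP]
  have hch : hP.choose = j := by
    by_contra hne
    have h1 := hP.choose_spec j (fun hh => hne hh.symm)
    have h2 := h hP.choose hne
    rw [hconv, hconv] at h1
    exact absurd (h1.trans h2) (lt_irrefl _)
  rw [hch]

theorem ajpaStep_fst (K : IntermediateField ℚ ℝ) (x y x' y' : ℝ)
    (h : y / Real.sqrt |(ajpaNorm K y : ℝ)| < x / Real.sqrt |(ajpaNorm K x : ℝ)|)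
    (hx : Int.fract (1 / x) = x') (hy : Int.fract (y / x) = y') :
    ajpaStep K ![x, y] = ![x', y'] := by
  rw [ajpaStep_pair K x y 0 (by
    intro i hi
    fin_cases i
    · exact absurd rfl hi
    · simpa using h)]
  funext i
  fin_cases i
  · simpa using hx
  · simpa [show ¬((1 : Fin 2) = 0) by decide] using hy

theorem ajpaStep_snd (K : IntermediateField ℚ ℝ) (x y x' y' : ℝ)
    (h : x / Real.sqrt |(ajpaNorm K x : ℝ)| < y / Real.sqrt |(ajpaNorm K y : ℝ)|)
    (hx : Int.fract (x / y) = x') (hy : Int.fract (1 / y) = y') :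
    ajpaStep K ![x, y] = ![x', y'] := by
  rw [ajpaStep_pair K x y 1 (by
    intro i hi
    fin_cases i
    · simpa using h
    · exact absurd rfl hi)]
  funext i
  fin_cases i
  · simpa [show ¬((0 : Fin 2) = 1) by decide] using hx
  · simpa using hy

theorem aux_norm_formula (d : ℤ) (hd : 1 ≤ d) (α : ℝ)
    (hcube : α ^ 3 + 1 = ((d : ℝ) + 2) * α) (x0 x1 x2 : ℚ) :
    Algebra.norm ℚ (algebraMap ℚ ℚ⟮α⟯ x0 + algebraMap ℚ ℚ⟮α⟯ x1 * AdjoinSimple.gen ℚ α +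
        algebraMap ℚ ℚ⟮α⟯ x2 * AdjoinSimple.gen ℚ α ^ 2) =
      x0 ^ 3 - x1 ^ 3 + x2 ^ 3 + 3 * x0 * x1 * x2 - ((d : ℚ) + 2) * x0 * x1 ^ 2
        + ((d : ℚ) + 2) * x1 * x2 ^ 2 + 2 * ((d : ℚ) + 2) * x0 ^ 2 * x2
        + ((d : ℚ) + 2) ^ 2 * x0 * x2 ^ 2 := by
  set q : ℤ[X] := X ^ 3 - C (d + 2) * X + 1 with hq
  have hqmonic : q.Monic := by rw [hq]; monicity!
  have hqdeg : q.natDegree = 3 := by rw [hq]; compute_degree!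
  set p : ℚ[X] := q.map (algebraMap ℤ ℚ) with hp
  have hmonic : p.Monic := hqmonic.map _
  have hdeg : p.natDegree = 3 := by
    rw [hp, Polynomial.natDegree_map_eq_of_injective (algebraMap ℤ ℚ).injective_int, hqdeg]
  have haq : ∀ {S : Type} [CommRing S] [Algebra ℚ S] (x : S),
      (Polynomial.aeval x) p = x ^ 3 - (((d + 2 : ℤ)) : S) * x + 1 := by
    intro S _ _ x
    rw [hp, Polynomial.aeval_map_algebraMap, hq]
    simp only [map_add, map_sub, map_mul, map_pow, map_one, aeval_X, aeval_C, eq_intCast,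
      map_intCast, map_ofNat]
    push_cast
    ring
  have hroot : (Polynomial.aeval α) p = 0 := by
    rw [haq]; push_cast; linarith [hcube]
  have hint : IsIntegral ℚ α := ⟨p, hmonic, hroot⟩
  have hirr : Irreducible p := by
    rw [Polynomial.irreducible_iff_roots_eq_zero_of_degree_le_three (by omega) (by omega)]
    rw [Multiset.eq_zero_iff_forall_notMem]
    intro r hr
    have hisr : p.IsRoot r := (Polynomial.mem_roots hmonic.ne_zero).mp hr
    have hr0 : (Polynomial.aeval r) p = 0 := by simpa using hisr
    have hqr : (Polynomial.aeval r) q = 0 := by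
      rw [hp, Polynomial.aeval_map_algebraMap] at hr0; exact hr0
    obtain ⟨m, hm, hmdvd⟩ := exists_integer_of_is_root_of_monic hqmonic hqr
    have hc0 : q.coeff 0 = 1 := by rw [hq]; simp
    rw [hc0] at hmdvd
    have hre : r ^ 3 + 1 = ((d : ℚ) + 2) * r := by
      rw [haq] at hr0; push_cast at hr0; linarith
    rcases Int.isUnit_iff.mp (isUnit_of_dvd_one hmdvd) with h1 | h1
    · rw [h1] at hm; rw [hm] at hre; push_cast at hre; norm_num at hre
      exact absurd hre (by omega)
    · rw [h1] at hm; rw [hm] at hre; push_cast at hre; norm_num at hre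
      have h2 : (d : ℚ) = -2 := by linarith
      have h3 : d = -2 := by exact_mod_cast h2
      omega
  have hminp : minpoly ℚ α = p := (minpoly.eq_of_irreducible_of_monic hirr hroot hmonic).symm
  set pb := IntermediateField.adjoin.powerBasis hint with hpb
  have hpbdim : pb.dim = 3 := by
    rw [hpb, IntermediateField.adjoin.powerBasis_dim, hminp, hdeg]
  set A := AdjoinSimple.gen ℚ α with hA
  have hgen : pb.gen = A := rfl
  set b : Module.Basis (Fin 3) ℚ ℚ⟮α⟯ := pb.basis.reindex (finCongr hpbdim) with hb
  have hbi : ∀ i : Fin 3, b i = A ^ (i : ℕ) := by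
    intro i
    rw [hb, Module.Basis.reindex_apply, pb.basis_eq_pow, hgen]
    congr 1
  have hA3 : A ^ 3 = algebraMap ℚ ℚ⟮α⟯ ((d : ℚ) + 2) * A - 1 := by
    have h0 := haq (S := ℚ⟮α⟯) A
    have hminA : minpoly ℚ A = p := by
      rw [hA]; exact (IntermediateField.minpoly_gen ℚ α).trans hminp
    have h1 : (Polynomial.aeval A) p = 0 := hminA ▸ minpoly.aeval ℚ A
    rw [h1] at h0
    have h2 : ((d + 2 : ℤ) : ℚ⟮α⟯) = algebraMap ℚ ℚ⟮α⟯ ((d : ℚ) + 2) := by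
      rw [map_add, map_intCast]
      push_cast
      norm_num
    rw [h2] at h0
    linear_combination -h0
  set F := algebraMap ℚ ℚ⟮α⟯ with hF
  set e : ℚ := (d : ℚ) + 2 with he
  have hA3' : A ^ 3 = F e * A - 1 := hA3
  set X : ℚ⟮α⟯ := F x0 + F x1 * A + F x2 * A ^ 2 with hX
  have hrep : ∀ (c0 c1 c2 : ℚ) (i : Fin 3),
      b.repr (F c0 + F c1 * A + F c2 * A ^ 2) i = ![c0, c1, c2] i := by
    intro c0 c1 c2 i
    have hsum : F c0 + F c1 * A + F c2 * A ^ 2 = ∑ k : Fin 3, ![c0, c1, c2] k • b k := by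
      rw [Fin.sum_univ_three]
      simp only [hbi, Matrix.cons_val_zero, Matrix.cons_val_one, Matrix.head_cons,
        Matrix.cons_val_two, Matrix.tail_cons]
      simp only [Algebra.smul_def, ← hF]
      norm_num
    rw [hsum, b.repr_sum_self]
  have hM : ∀ (i j : Fin 3), Algebra.leftMulMatrix b X i j = b.repr (X * b j) i := by
    intro i j
    classical
    rw [Algebra.leftMulMatrix_apply, LinearMap.toMatrix_apply]
    congr 1
  have hc0 : X * b 0 = F x0 + F x1 * A + F x2 * A ^ 2 := by
    rw [hbi 0]
    show X * A ^ (0 : ℕ) = _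
    rw [pow_zero, mul_one, hX]
  have hc1 : X * b 1 = F (-x2) + F (x0 + e * x2) * A + F x1 * A ^ 2 := by
    rw [hbi 1]
    show X * A ^ (1 : ℕ) = _
    rw [pow_one, hX]
    simp only [map_neg, map_add, map_sub, map_mul]
    linear_combination F x2 * hA3'
  have hc2 : X * b 2 = F (-x1) + F (e * x1 - x2) * A + F (x0 + e * x2) * A ^ 2 := by
    rw [hbi 2]
    show X * A ^ (2 : ℕ) = _
    rw [hX]
    simp only [map_neg, map_add, map_sub, map_mul]
    linear_combination (F x1 + F x2 * A) * hA3'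
  have hnorm : Algebra.norm ℚ X = (Algebra.leftMulMatrix b X).det :=
    Algebra.norm_eq_matrix_det b X
  rw [hnorm, Matrix.det_fin_three]
  simp only [hM, hc0, hc1, hc2, hrep]
  simp only [Matrix.cons_val_zero, Matrix.cons_val_one, Matrix.head_cons,
    Matrix.cons_val_two, Matrix.tail_cons]
  rw [he]
  ring

set_option maxHeartbeats 2000000 in
theorem aux_cycle (d : ℤ) (hd : 1 ≤ d) (α : ℝ) (hα0 : 0 < α) (hα1 : α < 1)
    (hcube : α ^ 3 + 1 = ((d : ℝ) + 2) * α) :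
    ∀ n : ℕ, 3 ≤ n →
      (ajpaStep (IntermediateField.adjoin ℚ {α}))^[n + 4] ![α, α ^ 2] =
      (ajpaStep (IntermediateField.adjoin ℚ {α}))^[n] ![α, α ^ 2] := by
  -- basic real facts
  have hd0 : (0:ℝ) < (d:ℝ) := by exact_mod_cast hd
  have hd1 : (1:ℝ) ≤ (d:ℝ) := by exact_mod_cast hd
  have hdq0 : ((d:ℚ)) ≠ 0 := by
    have : d ≠ 0 := by omega
    exact_mod_cast this
  have hdr0 : ((d:ℝ)) ≠ 0 := ne_of_gt hd0
  have hαne : α ≠ 0 := ne_of_gt hα0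
  have hα3 : α ^ 3 < α := by nlinarith [mul_lt_mul_of_pos_left hα1 (mul_pos hα0 hα0), mul_lt_mul_of_pos_left hα1 hα0]
  have hkey : ((d:ℝ) + 1) * α < 1 := by nlinarith
  have hhalf : α < 1/2 := by nlinarith
  have hβ : 0 < 1 - α - α ^ 2 := by nlinarith
  have h1a2 : 0 < 1 - α ^ 2 := by nlinarith
  have h1a : 0 < 1 - α := by nlinarith
  have hid1 : (d:ℝ) * α = (1 - α) * (1 - α - α ^ 2) := by linear_combination -hcube
  have hid2 : (d:ℝ) * (α + α ^ 2) = (1 - α ^ 2) * (1 - α - α ^ 2) := by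
    linear_combination (-1 - α) * hcube
  have sqlt : ∀ a b : ℝ, 0 ≤ a → 0 < b → a ^ 2 < b ^ 2 → a < b := by
    intro a b ha hb h2
    nlinarith
  have fr : ∀ (m : ℤ) (x y : ℝ), x = (m:ℝ) + y → 0 ≤ y → y < 1 → Int.fract x = y := by
    intro m x y hxy h0 h1
    rw [hxy, Int.fract_intCast_add, Int.fract_eq_self.mpr ⟨h0, h1⟩]
  -- the adjoined field and norms
  set A := AdjoinSimple.gen ℚ α with hA
  have hAcoe : (A : ℝ) = α := rfl
  have hco : ∀ y0 y1 y2 : ℚ,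
      ((algebraMap ℚ ℚ⟮α⟯ y0 + algebraMap ℚ ℚ⟮α⟯ y1 * A + algebraMap ℚ ℚ⟮α⟯ y2 * A ^ 2 :
        ℚ⟮α⟯) : ℝ) = (y0 : ℝ) + (y1 : ℝ) * α + (y2 : ℝ) * α ^ 2 := by
    intro y0 y1 y2
    push_cast [hAcoe]
    norm_num
  have nval : ∀ (x0 x1 x2 : ℚ) (r : ℝ), ((x0 : ℝ) + (x1 : ℝ) * α + (x2 : ℝ) * α ^ 2 = r) →
      ajpaNorm ℚ⟮α⟯ r = x0 ^ 3 - x1 ^ 3 + x2 ^ 3 + 3 * x0 * x1 * x2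
        - ((d : ℚ) + 2) * x0 * x1 ^ 2 + ((d : ℚ) + 2) * x1 * x2 ^ 2
        + 2 * ((d : ℚ) + 2) * x0 ^ 2 * x2 + ((d : ℚ) + 2) ^ 2 * x0 * x2 ^ 2 := by
    intro x0 x1 x2 r hr
    have h2 : ((algebraMap ℚ ℚ⟮α⟯ x0 + algebraMap ℚ ℚ⟮α⟯ x1 * A + algebraMap ℚ ℚ⟮α⟯ x2 * A ^ 2 :
        ℚ⟮α⟯) : ℝ) = r := by rw [hco]; exact hr
    rw [← h2, ajpaNorm_coe, aux_norm_formula d hd α hcube x0 x1 x2]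
  set D : ℚ := (d : ℚ) * ((d : ℚ) + 2) with hD
  have hDne : D ≠ 0 := by
    rw [hD]
    intro h
    rcases mul_eq_zero.mp h with h' | h'
    · exact hdq0 h'
    · have : (d:ℚ) = -2 := by linarith
      have : d = -2 := by exact_mod_cast this
      omega
  have nv_a : ajpaNorm ℚ⟮α⟯ α = -1 := by
    rw [nval 0 1 0 α (by push_cast; ring)]; norm_num
  have nv_a2 : ajpaNorm ℚ⟮α⟯ (α ^ 2) = 1 := by
    rw [nval 0 0 1 (α ^ 2) (by push_cast; ring)]; norm_num
  have nv_1a2 : ajpaNorm ℚ⟮α⟯ (1 - α ^ 2) = D := by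
    rw [nval 1 0 (-1) (1 - α ^ 2) (by push_cast; ring)]; rw [hD]; push_cast; ring
  have nv_b : ajpaNorm ℚ⟮α⟯ (1 - α - α ^ 2) = (d : ℚ) ^ 2 := by
    rw [nval 1 (-1) (-1) (1 - α - α ^ 2) (by push_cast; ring)]; push_cast; ring
  have nv_q1 : ajpaNorm ℚ⟮α⟯ (α ^ 2 / (1 - α ^ 2)) = 1 / D := by
    rw [nval (1/D) (-(1/D)) (-(((d:ℚ)+1)/D)) (α ^ 2 / (1 - α ^ 2)) ?_]
    · rw [hD]; field_simp; ring
    · rw [hD]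
      push_cast
      rw [eq_div_iff (ne_of_gt h1a2)]
      field_simp
      linear_combination (1 + ((d:ℝ)+1)*α) * hcube
  have nv_q2 : ajpaNorm ℚ⟮α⟯ (α / (1 - α ^ 2)) = -(1 / D) := by
    rw [nval (((d:ℚ)+1)/D) (-(((d:ℚ)+1)/D)) (-(1/D)) (α / (1 - α ^ 2)) ?_]
    · rw [hD]; field_simp; ring
    · rw [hD]
      push_cast
      rw [eq_div_iff (ne_of_gt h1a2)]
      field_simp
      linear_combination (((d:ℝ)+1) + α) * hcube
  have nv_c1 : ajpaNorm ℚ⟮α⟯ ((1 - α) / (d:ℝ)) = -(1 / (d:ℚ) ^ 2) := by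
    rw [nval (1/(d:ℚ)) (-(1/(d:ℚ))) 0 ((1 - α) / (d:ℝ)) ?_]
    · field_simp; ring
    · push_cast
      field_simp
      ring
  have nv_c2 : ajpaNorm ℚ⟮α⟯ ((1 - α ^ 2) / (d:ℝ)) = ((d:ℚ) + 2) / (d:ℚ) ^ 2 := by
    rw [nval (1/(d:ℚ)) 0 (-(1/(d:ℚ))) ((1 - α ^ 2) / (d:ℝ)) ?_]
    · field_simp; ring
    · push_cast
      field_simp
      ring
  -- fract identities
  have F0a : Int.fract (1 / α) = 1 - α ^ 2 := by
    refine fr (d + 1) _ _ ?_ (by nlinarith) (by nlinarith)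
    push_cast
    rw [div_eq_iff hαne]
    linear_combination hcube
  have F0b : Int.fract (α ^ 2 / α) = α := by
    rw [show α ^ 2 / α = α from by rw [sq, mul_div_assoc, div_self hαne, mul_one]]
    exact Int.fract_eq_self.mpr ⟨hα0.le, hα1⟩
  have F1a : Int.fract (1 / (1 - α ^ 2)) = α ^ 2 / (1 - α ^ 2) := by
    refine fr 1 _ _ ?_ (by positivity) (by rw [div_lt_one h1a2]; nlinarith)
    push_cast
    field_simp
    ring
  have F1b : Int.fract (α / (1 - α ^ 2)) = α / (1 - α ^ 2) :=
    Int.fract_eq_self.mpr ⟨by positivity, by rw [div_lt_one h1a2]; nlinarith⟩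
  have F2a : Int.fract (α ^ 2 / (1 - α ^ 2) / (α / (1 - α ^ 2))) = α := by
    rw [show α ^ 2 / (1 - α ^ 2) / (α / (1 - α ^ 2)) = α from by
      rw [div_div_div_comm, div_self (ne_of_gt h1a2), sq, mul_div_assoc, div_self hαne,
        mul_one, div_one]]
    exact Int.fract_eq_self.mpr ⟨hα0.le, hα1⟩
  have F2b : Int.fract (1 / (α / (1 - α ^ 2))) = 1 - α - α ^ 2 := by
    rw [one_div_div]
    refine fr (d + 1) _ _ ?_ (by nlinarith) (by nlinarith)
    push_cast
    rw [div_eq_iff hαne]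
    linear_combination hcube
  have F3a : Int.fract (α / (1 - α - α ^ 2)) = (1 - α) / (d : ℝ) := by
    rw [show α / (1 - α - α ^ 2) = (1 - α) / (d : ℝ) from by
      rw [div_eq_div_iff (ne_of_gt hβ) hdr0]; linear_combination hid1]
    refine Int.fract_eq_self.mpr ⟨by positivity, ?_⟩
    rw [div_lt_one hd0]
    nlinarith
  have F3b : Int.fract (1 / (1 - α - α ^ 2)) = (1 - α ^ 2) / (d : ℝ) := by
    refine fr 1 _ _ ?_ (by positivity) ?_
    · push_cast
      field_simp
      linear_combination hid2
    · rw [div_lt_one hd0]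
      nlinarith
  have F4a : Int.fract (1 / ((1 - α) / (d : ℝ))) = 1 - α - α ^ 2 := by
    rw [one_div_div]
    refine fr d _ _ ?_ (by nlinarith) (by nlinarith)
    rw [div_eq_iff (ne_of_gt h1a)]
    linear_combination hid1
  have F4b : Int.fract ((1 - α ^ 2) / (d : ℝ) / ((1 - α) / (d : ℝ))) = α := by
    rw [show (1 - α ^ 2) / (d : ℝ) / ((1 - α) / (d : ℝ)) = ((1:ℤ):ℝ) + α from by
      rw [div_div_div_comm, div_self hdr0, div_one, div_eq_iff (ne_of_gt h1a)]
      push_cast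
      ring]
    rw [Int.fract_intCast_add]
    exact Int.fract_eq_self.mpr ⟨hα0.le, hα1⟩
  -- comparison inequalities
  have hDpos : (0:ℝ) < (d:ℝ) * ((d:ℝ) + 2) := by nlinarith
  have cmp0 : α ^ 2 / Real.sqrt |((ajpaNorm ℚ⟮α⟯ (α ^ 2)) : ℝ)| <
      α / Real.sqrt |((ajpaNorm ℚ⟮α⟯ α) : ℝ)| := by
    rw [nv_a, nv_a2]
    push_cast
    rw [abs_neg, abs_one, Real.sqrt_one, div_one, div_one]
    nlinarith [mul_lt_mul_of_pos_left hα1 hα0]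
  have cmp1 : α / Real.sqrt |((ajpaNorm ℚ⟮α⟯ α) : ℝ)| <
      (1 - α ^ 2) / Real.sqrt |((ajpaNorm ℚ⟮α⟯ (1 - α ^ 2)) : ℝ)| := by
    rw [nv_a, nv_1a2, hD]
    push_cast
    rw [abs_neg, abs_one, Real.sqrt_one, div_one, abs_of_pos hDpos]
    rw [lt_div_iff₀ (Real.sqrt_pos.mpr hDpos)]
    have hsq1 : (1 - α ^ 2) ^ 2 = 1 - α + (d:ℝ) * α ^ 2 := by linear_combination α * hcube
    refine sqlt _ _ (by positivity) h1a2 ?_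
    rw [mul_pow, Real.sq_sqrt hDpos.le]
    nlinarith [hsq1, hkey, mul_lt_mul_of_pos_left hkey (mul_pos hd0 hα0)]
  have cmp2 : α ^ 2 / (1 - α ^ 2) / Real.sqrt |((ajpaNorm ℚ⟮α⟯ (α ^ 2 / (1 - α ^ 2))) : ℝ)| <
      α / (1 - α ^ 2) / Real.sqrt |((ajpaNorm ℚ⟮α⟯ (α / (1 - α ^ 2))) : ℝ)| := by
    rw [nv_q1, nv_q2, hD]
    push_cast
    rw [abs_neg]
    have hQ : (0:ℝ) < 1 / ((d:ℝ) * ((d:ℝ) + 2)) := by positivity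
    rw [abs_of_pos hQ]
    rw [div_lt_div_iff_of_pos_right (Real.sqrt_pos.mpr hQ), div_lt_div_iff_of_pos_right h1a2]
    nlinarith [mul_lt_mul_of_pos_left hα1 hα0]
  have cmp35 : α / Real.sqrt |((ajpaNorm ℚ⟮α⟯ α) : ℝ)| <
      (1 - α - α ^ 2) / Real.sqrt |((ajpaNorm ℚ⟮α⟯ (1 - α - α ^ 2)) : ℝ)| := by
    rw [nv_a, nv_b]
    push_cast
    rw [abs_neg, abs_one, Real.sqrt_one, div_one,
      abs_of_pos (by positivity : (0:ℝ) < (d:ℝ) ^ 2), Real.sqrt_sq hd0.le]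
    rw [lt_div_iff₀ hd0]
    nlinarith [hid1, mul_pos hα0 hβ]
  have cmp46 : (1 - α ^ 2) / (d : ℝ) /
        Real.sqrt |((ajpaNorm ℚ⟮α⟯ ((1 - α ^ 2) / (d : ℝ))) : ℝ)| <
      (1 - α) / (d : ℝ) / Real.sqrt |((ajpaNorm ℚ⟮α⟯ ((1 - α) / (d : ℝ))) : ℝ)| := by
    rw [nv_c1, nv_c2]
    push_cast
    have hd2 : (0:ℝ) < (d:ℝ) + 2 := by nlinarith
    rw [abs_neg, abs_of_pos (by positivity : (0:ℝ) < 1 / (d:ℝ) ^ 2),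
      abs_of_pos (by positivity : (0:ℝ) < ((d:ℝ) + 2) / (d:ℝ) ^ 2)]
    rw [one_div, Real.sqrt_inv, Real.sqrt_sq hd0.le,
      Real.sqrt_div hd2.le, Real.sqrt_sq hd0.le]
    rw [show (1 - α) / (d:ℝ) / ((d:ℝ))⁻¹ = 1 - α from by field_simp]
    rw [div_div_div_comm, div_self hdr0, div_one]
    rw [div_lt_iff₀ (Real.sqrt_pos.mpr hd2)]
    refine sqlt _ _ h1a2.le (mul_pos h1a (Real.sqrt_pos.mpr hd2)) ?_
    rw [mul_pow, Real.sq_sqrt hd2.le]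
    nlinarith [mul_lt_mul_of_pos_left (show (1 + α) ^ 2 < (d:ℝ) + 2 by nlinarith)
      (show (0:ℝ) < (1 - α) ^ 2 by positivity)]
  -- the seven steps
  have step0 : ajpaStep ℚ⟮α⟯ ![α, α ^ 2] = ![1 - α ^ 2, α] :=
    ajpaStep_fst _ _ _ _ _ cmp0 F0a F0b
  have step1 : ajpaStep ℚ⟮α⟯ ![1 - α ^ 2, α] = ![α ^ 2 / (1 - α ^ 2), α / (1 - α ^ 2)] :=
    ajpaStep_fst _ _ _ _ _ cmp1 F1a F1b
  have step2 : ajpaStep ℚ⟮α⟯ ![α ^ 2 / (1 - α ^ 2), α / (1 - α ^ 2)] = ![α, 1 - α - α ^ 2] :=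
    ajpaStep_snd _ _ _ _ _ cmp2 F2a F2b
  have step3 : ajpaStep ℚ⟮α⟯ ![α, 1 - α - α ^ 2] = ![(1 - α) / (d:ℝ), (1 - α ^ 2) / (d:ℝ)] :=
    ajpaStep_snd _ _ _ _ _ cmp35 F3a F3b
  have step4 : ajpaStep ℚ⟮α⟯ ![(1 - α) / (d:ℝ), (1 - α ^ 2) / (d:ℝ)] = ![1 - α - α ^ 2, α] :=
    ajpaStep_fst _ _ _ _ _ cmp46 F4a F4b
  have step5 : ajpaStep ℚ⟮α⟯ ![1 - α - α ^ 2, α] = ![(1 - α ^ 2) / (d:ℝ), (1 - α) / (d:ℝ)] :=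
    ajpaStep_fst _ _ _ _ _ cmp35 F3b F3a
  have step6 : ajpaStep ℚ⟮α⟯ ![(1 - α ^ 2) / (d:ℝ), (1 - α) / (d:ℝ)] = ![α, 1 - α - α ^ 2] :=
    ajpaStep_snd _ _ _ _ _ cmp46 F4b F4a
  -- assembly
  have hT3 : (ajpaStep ℚ⟮α⟯)^[3] ![α, α ^ 2] = ![α, 1 - α - α ^ 2] := by
    show ajpaStep ℚ⟮α⟯ (ajpaStep ℚ⟮α⟯ (ajpaStep ℚ⟮α⟯ ![α, α ^ 2])) = _
    rw [step0, step1, step2]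
  have hT4 : (ajpaStep ℚ⟮α⟯)^[4] ![α, 1 - α - α ^ 2] = ![α, 1 - α - α ^ 2] := by
    show ajpaStep ℚ⟮α⟯ (ajpaStep ℚ⟮α⟯ (ajpaStep ℚ⟮α⟯ (ajpaStep ℚ⟮α⟯ ![α, 1 - α - α ^ 2]))) = _
    rw [step3, step4, step5, step6]
  intro n hn
  induction n, hn using Nat.le_induction with
  | base =>
    have h1 : (ajpaStep ℚ⟮α⟯)^[3 + 4] ![α, α ^ 2] =
        (ajpaStep ℚ⟮α⟯)^[4] ((ajpaStep ℚ⟮α⟯)^[3] ![α, α ^ 2]) := by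
      rw [add_comm, Function.iterate_add_apply]
    rw [h1, hT3, hT4]
  | succ n hn ih =>
    have e1 : n + 1 + 4 = (n + 4) + 1 := by omega
    calc (ajpaStep ℚ⟮α⟯)^[n + 1 + 4] ![α, α ^ 2]
        = ajpaStep ℚ⟮α⟯ ((ajpaStep ℚ⟮α⟯)^[n + 4] ![α, α ^ 2]) := by
          rw [e1, Function.iterate_succ_apply']
      _ = ajpaStep ℚ⟮α⟯ ((ajpaStep ℚ⟮α⟯)^[n] ![α, α ^ 2]) := by rw [ih]
      _ = (ajpaStep ℚ⟮α⟯)^[n + 1] ![α, α ^ 2] := (Function.iterate_succ_apply' _ _ _).symm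

/-- Let `a, b` be integers with `b ≤ 3a^2 - 3` and let `γ` be the real root
of `x^3 + 3ax^2 + bx + ab - 2a^3 + 1 = 0` with `-a < γ < -a + 1`; let `K = ℚ(γ) ⊆ ℝ`.
Then the orbit of the pair `(γ - ⌊γ⌋, (γ - ⌊γ⌋)^2)` under the Algebraic Jacobi-Perron
transformation `T_K` is eventually periodic with period `4`. -/
theorem stmt_11 (a b : ℤ) (hb : b ≤ 3 * a ^ 2 - 3) (γ : ℝ)
    (hroot : γ ^ 3 + 3 * (a : ℝ) * γ ^ 2 + (b : ℝ) * γ +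
      ((a : ℝ) * (b : ℝ) - 2 * (a : ℝ) ^ 3 + 1) = 0)
    (h1 : -(a : ℝ) < γ) (h2 : γ < -(a : ℝ) + 1) :
    ∃ N : ℕ, ∀ n : ℕ, N ≤ n →
      (ajpaStep (IntermediateField.adjoin ℚ {γ}))^[n + 4]
          ![γ - (⌊γ⌋ : ℝ), (γ - (⌊γ⌋ : ℝ)) ^ 2] =
      (ajpaStep (IntermediateField.adjoin ℚ {γ}))^[n]
          ![γ - (⌊γ⌋ : ℝ), (γ - (⌊γ⌋ : ℝ)) ^ 2] := by
  have hfloor : ⌊γ⌋ = -a := by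
    rw [Int.floor_eq_iff]
    constructor
    · push_cast; linarith
    · push_cast; linarith
  set d : ℤ := 3 * a ^ 2 - b - 2 with hdd
  have hd : 1 ≤ d := by omega
  set α : ℝ := γ - (⌊γ⌋ : ℝ) with hα
  have hαγ : α = γ + (a : ℝ) := by rw [hα, hfloor]; push_cast; ring
  have hα0 : 0 < α := by rw [hαγ]; linarith
  have hα1 : α < 1 := by rw [hαγ]; linarith
  have hcube : α ^ 3 + 1 = ((d : ℝ) + 2) * α := by
    rw [hαγ, hdd]
    push_cast
    linear_combination hroot
  have hKeq : IntermediateField.adjoin ℚ {γ} = IntermediateField.adjoin ℚ {α} := by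
    apply le_antisymm
    · rw [IntermediateField.adjoin_le_iff]
      intro x hx
      rw [Set.mem_singleton_iff] at hx
      rw [hx]
      have hmem : α ∈ IntermediateField.adjoin ℚ {α} :=
        IntermediateField.mem_adjoin_simple_self ℚ α
      have hamem : ((a : ℤ) : ℝ) ∈ IntermediateField.adjoin ℚ {α} :=
        intCast_mem (IntermediateField.adjoin ℚ {α}) a
      have hγα : γ = α - (a : ℝ) := by rw [hαγ]; ring
      rw [hγα]
      exact sub_mem hmem (by exact_mod_cast hamem)
    · rw [IntermediateField.adjoin_le_iff]
      intro x hx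
      rw [Set.mem_singleton_iff] at hx
      rw [hx]
      have hmem : γ ∈ IntermediateField.adjoin ℚ {γ} :=
        IntermediateField.mem_adjoin_simple_self ℚ γ
      have hamem : ((a : ℤ) : ℝ) ∈ IntermediateField.adjoin ℚ {γ} :=
        intCast_mem (IntermediateField.adjoin ℚ {γ}) a
      rw [hαγ]
      exact add_mem hmem (by exact_mod_cast hamem)
  rw [hKeq]
  exact ⟨3, fun n hn => aux_cycle d hd α hα0 hα1 hcube n hn⟩
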